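/- Let p, q be coprime positive integers with q > 2p, let 0 ≤ r ≤ q − 2p, and let σ be the permutation of {1,...,q} defined by: σ(i) = i + p for 1 ≤ i ≤ r; σ(r+i) = q − i + 1 for 1 ≤ i ≤ p; σ(r+p+i) = p − i + 1 for 1 ≤ i ≤ p; σ(r+2p+i) = r + p + i for 1 ≤ i ≤ q − 2p − r. Then σ is a cyclic permutation, i.e., σ acts transitively on {1, ..., q}. -/

import Mathlib

/-- The permutation `σ` of the over-twist pattern `Γ_{r,p/q}` is
cyclic: it acts transitively on `{1,…,q}`. -/
theorem overtwist_sigma_is_cyclic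
    (p q r : ℕ) (hp : 0 < p) (hq : 0 < q) (h2p : 2 * p < q)
    (hr : r ≤ q - 2 * p) (hcop : Nat.gcd p q = 1)
    (σ : ℕ → ℕ)
    (h1 : ∀ i, 1 ≤ i → i ≤ r → σ i = i + p)
    (h2 : ∀ i, 1 ≤ i → i ≤ p → σ (r + i) = q - i + 1)
    (h3 : ∀ i, 1 ≤ i → i ≤ p → σ (r + p + i) = p - i + 1)
    (h4 : ∀ i, 1 ≤ i → i ≤ q - 2 * p - r → σ (r + 2 * p + i) = r + p + i) :
    ∀ i ∈ Set.Icc 1 q, ∀ j ∈ Set.Icc 1 q, ∃ n : ℕ, σ^[n] i = j := by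
  have hrq : r + 2 * p ≤ q := by omega
  set φ : ℕ → ℕ := fun x => if x < r + p then x + 1 else q + r + p - x with hφ
  -- key conjugacy: σ (φ x) = φ ((x + p) % q)
  have key : ∀ x, x < q → σ (φ x) = φ ((x + p) % q) := by
    intro x hx
    rcases lt_or_ge x r with hA | hxr
    · -- case A : x < r
      have e1 : φ x = x + 1 := by simp only [hφ]; rw [if_pos (by omega)]
      have e2 : (x + p) % q = x + p := Nat.mod_eq_of_lt (by omega)
      rw [e1, e2, h1 (x + 1) (by omega) (by omega)]
      simp only [hφ]; rw [if_pos (by omega)]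
      omega
    rcases lt_or_ge x (r + p) with hB | hxrp
    · -- case B : r ≤ x < r + p
      have e1 : φ x = r + (x - r + 1) := by
        simp only [hφ]; rw [if_pos (by omega)]; omega
      have e2 : (x + p) % q = x + p := Nat.mod_eq_of_lt (by omega)
      rw [e1, e2, h2 (x - r + 1) (by omega) (by omega)]
      simp only [hφ]; rw [if_neg (by omega)]
      omega
    rcases lt_or_ge (x + p) q with hC2 | hC1
    · -- case C2 : r + p ≤ x, x + p < q
      have e1 : φ x = r + 2 * p + (q - p - x) := by
        simp only [hφ]; rw [if_neg (by omega)]; omega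
      have e2 : (x + p) % q = x + p := Nat.mod_eq_of_lt hC2
      rw [e1, e2, h4 (q - p - x) (by omega) (by omega)]
      simp only [hφ]; rw [if_neg (by omega)]
      omega
    · -- case C1 : q ≤ x + p, x < q
      have e1 : φ x = r + p + (q - x) := by
        simp only [hφ]; rw [if_neg (by omega)]; omega
      have e2 : (x + p) % q = x + p - q := by
        rw [Nat.mod_eq_sub_mod (by omega), Nat.mod_eq_of_lt (by omega)]
      rw [e1, e2, h3 (q - x) (by omega) (by omega)]
      simp only [hφ]; rw [if_pos (by omega)]
      omega
  -- iterated conjugacy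
  have iter : ∀ n x, x < q → σ^[n] (φ x) = φ ((x + n * p) % q) := by
    intro n
    induction n with
    | zero => intro x hx; simp [Nat.mod_eq_of_lt hx]
    | succ n ih =>
      intro x hx
      rw [Function.iterate_succ_apply, key x hx, ih _ (Nat.mod_lt _ (by omega))]
      congr 1
      rw [Nat.mod_add_mod]
      congr 1
      ring
  -- surjectivity of φ onto [1, q]
  have surj : ∀ j, 1 ≤ j → j ≤ q → ∃ x, x < q ∧ φ x = j := by
    intro j hj1 hjq
    rcases le_or_gt j (r + p) with h | h
    · exact ⟨j - 1, by omega, by simp only [hφ]; rw [if_pos (by omega)]; omega⟩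
    · exact ⟨q + r + p - j, by omega, by simp only [hφ]; rw [if_neg (by omega)]; omega⟩
  intro i hi j hj
  simp only [Set.mem_Icc] at hi hj
  obtain ⟨x, hx, hxi⟩ := surj i hi.1 hi.2
  obtain ⟨y, hy, hyj⟩ := surj j hj.1 hj.2
  obtain ⟨a, -, ha⟩ := Nat.exists_mul_mod_eq_one_of_coprime hcop (by omega)
  refine ⟨a * (y + q - x), ?_⟩
  rw [← hxi, iter _ x hx, ← hyj]
  congr 1
  have h1' : (a * (y + q - x)) * p ≡ (y + q - x) * 1 [MOD q] := by
    calc (a * (y + q - x)) * p = (y + q - x) * (p * a) := by ring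
    _ ≡ (y + q - x) * 1 [MOD q] := Nat.ModEq.mul_left _ (by
        simpa [Nat.ModEq, Nat.mod_eq_of_lt (show 1 < q by omega)] using ha)
  have h2' : x + a * (y + q - x) * p ≡ x + (y + q - x) * 1 [MOD q] :=
    Nat.ModEq.add_left _ h1'
  have h3' : x + (y + q - x) * 1 = y + q := by omega
  calc (x + a * (y + q - x) * p) % q = (x + (y + q - x) * 1) % q := h2'
    _ = (y + q) % q := by rw [h3']
    _ = y := by rw [Nat.add_mod_right, Nat.mod_eq_of_lt hy]
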